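/- For every odd d ≥ 3, the special orthogonal group SO(d) is Perron and has no invariant cone: (a) every matrix A ∈ SO(d) has a Perron eigenvalue (in fact ρ(A) = 1 and 1 is an eigenvalue of A); (b) there is no proper cone K ⊆ ℝ^d with A K ⊆ K for every A ∈ SO(d). -/

import Mathlib

open Matrix

open scoped Classical

/-- A complex number `μ` is an eigenvalue of the complex matrix `M`. -/
def IsEigenvalueC {n : Type*} [Fintype n] (M : Matrix n n ℂ) (μ : ℂ) : Prop :=
  ∃ v : n → ℂ, v ≠ 0 ∧ M.mulVec v = μ • v

/-- The spectral radius of a real matrix: the maximum of the moduli of the complex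
eigenvalues of its complexification. -/
noncomputable def spectralRadius' {n : Type*} [Fintype n] (A : Matrix n n ℝ) : ℝ :=
  sSup {r : ℝ | ∃ μ : ℂ, IsEigenvalueC (A.map (fun x : ℝ => (x : ℂ))) μ ∧ r = ‖μ‖}

/-- `A` has a Perron eigenvalue: its spectral radius is a nonnegative eigenvalue of `A`. -/
def HasPerronEigenvalue {n : Type*} [Fintype n] (A : Matrix n n ℝ) : Prop :=
  0 ≤ spectralRadius' A ∧ ∃ v : n → ℝ, v ≠ 0 ∧ A.mulVec v = spectralRadius' A • v

/-- The expansion index of a real matrix: the sum, over all (complex) leading eigenvalues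
(those of modulus equal to the spectral radius), of their geometric multiplicities. -/
noncomputable def expansionIndex {n : Type*} [Fintype n] [DecidableEq n]
    (A : Matrix n n ℝ) : ℕ :=
  ∑ μ ∈ (((A.map (fun x : ℝ => (x : ℂ))).charpoly.roots.toFinset).filter
      (fun μ => ‖μ‖ = spectralRadius' A)),
    Module.finrank ℂ
      (LinearMap.ker (Matrix.toLin' ((A.map (fun x : ℝ => (x : ℂ))) - μ • (1 : Matrix n n ℂ))))

/-- A (multiplicative) semigroup of matrices: a nonempty set closed under multiplication. -/
def IsMatrixSemigroup {n : Type*} [Fintype n] (S : Set (Matrix n n ℝ)) : Prop :=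
  S.Nonempty ∧ ∀ A ∈ S, ∀ B ∈ S, A * B ∈ S

/-- An irreducible set of matrices: no common invariant subspace other than `{0}` and the
whole space. -/
def MatIrreducible {n : Type*} [Fintype n] (S : Set (Matrix n n ℝ)) : Prop :=
  ¬ ∃ V : Submodule ℝ (n → ℝ), V ≠ ⊥ ∧ V ≠ ⊤ ∧ ∀ A ∈ S, ∀ x ∈ V, A.mulVec x ∈ V

/-- A proper cone: a closed convex cone with nonempty interior which is pointed. -/
def IsProperCone {n : Type*} [Fintype n] (K : Set (n → ℝ)) : Prop :=
  IsClosed K ∧ (∀ x ∈ K, ∀ y ∈ K, x + y ∈ K) ∧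
    (∀ t : ℝ, 0 ≤ t → ∀ x ∈ K, t • x ∈ K) ∧
    (interior K).Nonempty ∧ (∀ x ∈ K, -x ∈ K → x = 0)

lemma exists_fixed_vec' {d : ℕ} (hodd : Odd d) (A : Matrix (Fin d) (Fin d) ℝ)
    (h1 : Aᵀ * A = 1) (h2 : A.det = 1) : ∃ v : Fin d → ℝ, v ≠ 0 ∧ A.mulVec v = v := by
  have hdet : (A - 1).det = 0 := by
    have e1 : ((1 : Matrix (Fin d) (Fin d) ℝ) - A) = (Aᵀ - 1) * A := by
      rw [sub_mul, h1, Matrix.one_mul]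
    have e2 : ((1 : Matrix (Fin d) (Fin d) ℝ) - A).det = (A - 1).det := by
      rw [e1, Matrix.det_mul, h2, mul_one, ← Matrix.det_transpose (A - 1)]
      congr 1
      simp [Matrix.transpose_sub]
    have e3 : ((1 : Matrix (Fin d) (Fin d) ℝ) - A).det = -(A - 1).det := by
      have h : ((1 : Matrix (Fin d) (Fin d) ℝ) - A) = -(A - 1) := by abel
      rw [h, Matrix.det_neg, Fintype.card_fin, hodd.neg_one_pow]
      ring
    linarith [e2, e3]
  obtain ⟨v, hv0, hv⟩ := (Matrix.exists_mulVec_eq_zero_iff).mpr hdet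
  refine ⟨v, hv0, ?_⟩
  rwa [Matrix.sub_mulVec, Matrix.one_mulVec, sub_eq_zero] at hv

lemma spectralRadius'_eq_one' {d : ℕ} (A : Matrix (Fin d) (Fin d) ℝ)
    (hA : Aᵀ * A = 1) (hv : ∃ v : Fin d → ℝ, v ≠ 0 ∧ A.mulVec v = v) :
    spectralRadius' A = 1 := by
  set M : Matrix (Fin d) (Fin d) ℂ := A.map (fun x : ℝ => (x : ℂ)) with hM
  have hMH : Mᴴ * M = 1 := by
    have h1 : Mᴴ = Aᵀ.map (fun x : ℝ => (x : ℂ)) := by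
      ext i j
      simp [hM, Matrix.conjTranspose_apply, Matrix.map_apply]
    have h2 : (Aᵀ.map (fun x : ℝ => (x : ℂ))) * (A.map (fun x : ℝ => (x : ℂ)))
        = (Aᵀ * A).map (fun x : ℝ => (x : ℂ)) :=
      (Matrix.map_mul (f := Complex.ofRealHom)).symm
    rw [h1, hM, h2, hA]
    ext i j
    simp [Matrix.map_apply, Matrix.one_apply]
    split <;> simp
  have key : ∀ μ : ℂ, IsEigenvalueC M μ → ‖μ‖ = 1 := by
    rintro μ ⟨v, hv0, hMv⟩
    have hspos : (0 : ℝ) < ∑ i, Complex.normSq (v i) := by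
      obtain ⟨i, hi⟩ := Function.ne_iff.mp hv0
      exact Finset.sum_pos' (fun j _ => Complex.normSq_nonneg _)
        ⟨i, Finset.mem_univ i, by simpa [Complex.normSq_pos] using hi⟩
    have hs : (star v) ⬝ᵥ v = ((∑ i, Complex.normSq (v i) : ℝ) : ℂ) := by
      simp only [dotProduct, Pi.star_apply]
      push_cast
      refine Finset.sum_congr rfl fun i _ => ?_
      exact (Complex.normSq_eq_conj_mul_self).symm
    have hcomp : star (M.mulVec v) ⬝ᵥ (M.mulVec v) = (star v) ⬝ᵥ v := by
      rw [Matrix.star_mulVec, Matrix.dotProduct_mulVec, Matrix.vecMul_vecMul, hMH,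
        Matrix.vecMul_one]
    rw [hMv] at hcomp
    have hlhs : star (μ • v) ⬝ᵥ (μ • v) = ((starRingEnd ℂ) μ * μ) * ((star v) ⬝ᵥ v) := by
      rw [star_smul, smul_dotProduct, dotProduct_smul]
      simp [smul_eq_mul, mul_assoc]
    rw [hlhs, hs] at hcomp
    have hne : ((∑ i, Complex.normSq (v i) : ℝ) : ℂ) ≠ 0 := by
      exact_mod_cast ne_of_gt hspos
    have hns : (starRingEnd ℂ) μ * μ = 1 := by
      have h' : ((starRingEnd ℂ) μ * μ) * ((∑ i, Complex.normSq (v i) : ℝ) : ℂ)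
          = 1 * ((∑ i, Complex.normSq (v i) : ℝ) : ℂ) := by
        rw [one_mul]; exact hcomp
      exact mul_right_cancel₀ hne h'
    have hnorm : ‖μ‖ * ‖μ‖ = 1 := by
      have := congrArg norm hns
      rwa [norm_mul, RCLike.norm_conj, norm_one] at this
    nlinarith [norm_nonneg μ]
  have h1mem : (1 : ℝ) ∈ {r : ℝ | ∃ μ : ℂ, IsEigenvalueC M μ ∧ r = ‖μ‖} := by
    obtain ⟨v, hv0, hAv⟩ := hv
    refine ⟨1, ⟨fun i => (v i : ℂ), ?_, ?_⟩, by simp⟩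
    · intro h
      apply hv0
      funext i
      have h2 := congrFun h i
      simp only [Pi.zero_apply] at h2 ⊢
      exact_mod_cast h2
    · funext i
      have : (A.mulVec v) i = v i := congrFun hAv i
      simp only [Matrix.mulVec, dotProduct, Matrix.map_apply, hM, one_smul]
      push_cast
      exact_mod_cast congrArg (fun r : ℝ => (r : ℂ)) this
  have hset : {r : ℝ | ∃ μ : ℂ, IsEigenvalueC M μ ∧ r = ‖μ‖} = {1} := by
    ext r
    simp only [Set.mem_setOf_eq, Set.mem_singleton_iff]
    constructor
    · rintro ⟨μ, hμ, rfl⟩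
      exact key μ hμ
    · rintro rfl
      exact h1mem
  rw [spectralRadius', hM] at *
  rw [hset, csSup_singleton]

lemma exists_SO_flip {d : ℕ} (hd : 3 ≤ d) (x : Fin d → ℝ) (hx : x ≠ 0) :
    ∃ A : Matrix (Fin d) (Fin d) ℝ, Aᵀ * A = 1 ∧ A.det = 1 ∧ A.mulVec x = -x := by
  haveI : NeZero d := ⟨by omega⟩
  set y : EuclideanSpace ℝ (Fin d) := WithLp.toLp 2 x with hy
  have hy0 : y ≠ 0 := fun h => hx (by simpa [hy] using congrArg (WithLp.ofLp) h)
  have hny : ‖y‖ ≠ 0 := norm_ne_zero_iff.mpr hy0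
  -- orthonormal singleton
  have hdim : Module.finrank ℝ (EuclideanSpace ℝ (Fin d)) = Fintype.card (Fin d) := by
    simp [finrank_euclideanSpace]
  have horth : Orthonormal ℝ (({0} : Set (Fin d)).restrict
      (fun _ : Fin d => (‖y‖⁻¹ : ℝ) • y)) := by
    constructor
    · intro i
      show ‖(‖y‖⁻¹ : ℝ) • y‖ = 1
      rw [norm_smul, norm_inv, norm_norm, inv_mul_cancel₀ hny]
    · intro i j hij
      exact absurd (Subsingleton.elim i j) hij
  obtain ⟨b, hb⟩ := horth.exists_orthonormalBasis_extension_of_card_eq hdim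
  have hb0 : b 0 = (‖y‖⁻¹ : ℝ) • y := hb 0 rfl
  -- orthonormality as sums
  have hbo : ∀ k l : Fin d, (∑ i, b k i * b l i) = if k = l then (1:ℝ) else 0 := by
    intro k l
    have := (orthonormal_iff_ite (𝕜 := ℝ)).mp b.orthonormal k l
    rw [PiLp.inner_apply] at this
    simpa [mul_comm] using this
  have hxb : ∀ i, x i = ‖y‖ * b 0 i := by
    intro i
    have : (‖y‖ : ℝ) • b 0 = y := by
      rw [hb0, smul_smul, mul_inv_cancel₀ hny, one_smul]
    have h2 := congrFun (congrArg (fun (z : EuclideanSpace ℝ (Fin d)) => (z : Fin d → ℝ)) this) i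
    simpa using h2.symm
  set ε : Fin d → ℝ := fun k => if (k : ℕ) < 2 then (-1 : ℝ) else 1 with hε
  set U : Matrix (Fin d) (Fin d) ℝ := Matrix.of (fun i k => b k i) with hU
  set D : Matrix (Fin d) (Fin d) ℝ := Matrix.diagonal ε with hD
  have hUtU : Uᵀ * U = 1 := by
    ext k l
    rw [Matrix.mul_apply, Matrix.one_apply]
    simpa [hU, Matrix.transpose_apply] using hbo k l
  have hUUt : U * Uᵀ = 1 := mul_eq_one_comm.mp hUtU
  have hDD : D * D = 1 := by
    rw [hD, Matrix.diagonal_mul_diagonal]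
    ext i j
    simp only [Matrix.diagonal_apply, Matrix.one_apply, hε]
    split
    · split <;> norm_num
    · rfl
  have hDt : Dᵀ = D := Matrix.diagonal_transpose ε
  refine ⟨U * D * Uᵀ, ?_, ?_, ?_⟩
  · have hAT : (U * D * Uᵀ)ᵀ = U * D * Uᵀ := by
      rw [Matrix.transpose_mul, Matrix.transpose_mul, hDt, Matrix.transpose_transpose,
        Matrix.mul_assoc]
    rw [hAT]
    have hassoc : (U * D * Uᵀ) * (U * D * Uᵀ) = U * (D * ((Uᵀ * U) * (D * Uᵀ))) := by
      simp only [Matrix.mul_assoc]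
    rw [hassoc, hUtU, Matrix.one_mul, ← Matrix.mul_assoc D D Uᵀ, hDD, Matrix.one_mul, hUUt]
  · have hdU : U.det * U.det = 1 := by
      have := congrArg Matrix.det hUtU
      rwa [Matrix.det_mul, Matrix.det_transpose, Matrix.det_one] at this
    have hdD : D.det = 1 := by
      rw [hD, Matrix.det_diagonal]
      rw [← Finset.prod_filter_mul_prod_filter_not Finset.univ (fun k : Fin d => (k : ℕ) < 2)]
      have hfil : Finset.univ.filter (fun k : Fin d => (k : ℕ) < 2)
          = {(⟨0, by omega⟩ : Fin d), ⟨1, by omega⟩} := by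
        ext k
        simp only [Finset.mem_filter, Finset.mem_univ, true_and, Finset.mem_insert,
          Finset.mem_singleton, Fin.ext_iff]
        omega
      have hc1 : (∏ k ∈ Finset.univ.filter (fun k : Fin d => (k : ℕ) < 2), ε k) = 1 := by
        rw [hfil]
        rw [Finset.prod_pair (by simp [Fin.ext_iff])]
        simp [hε]
      have hc2 : (∏ k ∈ Finset.univ.filter (fun k : Fin d => ¬ (k : ℕ) < 2), ε k) = 1 := by
        apply Finset.prod_eq_one
        intro k hk
        simp only [Finset.mem_filter] at hk
        simp only [hε, if_neg hk.2]
      rw [hc1, hc2, one_mul]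
    rw [Matrix.det_mul, Matrix.det_mul, Matrix.det_transpose, hdD]
    calc U.det * 1 * U.det = U.det * U.det := by ring
      _ = 1 := hdU
  · set c : Fin d → ℝ := fun k => if k = 0 then ‖y‖ else 0 with hc
    have h1 : Uᵀ.mulVec x = c := by
      funext k
      rw [Matrix.mulVec, dotProduct]
      simp only [hU, Matrix.transpose_apply, Matrix.of_apply, hc]
      calc (∑ i, b k i * x i) = ∑ i, ‖y‖ * (b k i * b 0 i) := by
            refine Finset.sum_congr rfl fun i _ => ?_
            rw [hxb i]; ring
        _ = ‖y‖ * ∑ i, b k i * b 0 i := by rw [Finset.mul_sum]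
        _ = ‖y‖ * (if k = 0 then 1 else 0) := by rw [hbo k 0]
        _ = if k = 0 then ‖y‖ else 0 := by split <;> ring
    have h2 : D.mulVec c = -c := by
      funext k
      rw [Matrix.mulVec_diagonal]
      simp only [hc, hε, Pi.neg_apply]
      by_cases hk : k = 0
      · subst hk; norm_num
      · simp [hk]
    have h3 : U.mulVec c = x := by
      funext i
      rw [Matrix.mulVec, dotProduct]
      simp only [hU, Matrix.of_apply, hc]
      rw [Finset.sum_eq_single (0 : Fin d)]
      · simp [hxb i]; ring
      · intro k _ hk; simp [hk]
      · intro h; exact absurd (Finset.mem_univ _) h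
    rw [← Matrix.mulVec_mulVec, ← Matrix.mulVec_mulVec, h1, h2, Matrix.mulVec_neg, h3]

/-- For odd `d ≥ 3`, `SO(d)` is Perron (every element has spectral radius `1`
and `1` is an eigenvalue) and has no invariant proper cone. -/
theorem SO_odd_perron_and_no_invariant_cone
    {d : ℕ} (hd : 3 ≤ d) (hodd : Odd d) :
    (∀ A : Matrix (Fin d) (Fin d) ℝ, Aᵀ * A = 1 → A.det = 1 →
      spectralRadius' A = 1 ∧ ∃ v : Fin d → ℝ, v ≠ 0 ∧ A.mulVec v = v) ∧
    ¬ ∃ K : Set (Fin d → ℝ), IsProperCone K ∧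
        ∀ A : Matrix (Fin d) (Fin d) ℝ, Aᵀ * A = 1 → A.det = 1 →
          ∀ x ∈ K, A.mulVec x ∈ K := by
  constructor
  · intro A hO hdet
    obtain ⟨v, hv0, hAv⟩ := exists_fixed_vec' hodd A hO hdet
    exact ⟨spectralRadius'_eq_one' A hO ⟨v, hv0, hAv⟩, v, hv0, hAv⟩
  · rintro ⟨K, ⟨hcl, hadd, hsmul, hint, hpt⟩, hinv⟩
    obtain ⟨y, hy⟩ := hint
    have hyK : y ∈ K := interior_subset hy
    have hex : ∃ x ∈ K, x ≠ 0 := by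
      by_cases h0 : y = 0
      · subst h0
        obtain ⟨ε, hε, hb⟩ := Metric.isOpen_iff.mp isOpen_interior 0 hy
        haveI : NeZero d := ⟨by omega⟩
        set p : Fin d → ℝ := fun i => if i = 0 then ε/2 else 0 with hp
        have hpK : p ∈ K := by
          apply interior_subset
          apply hb
          rw [Metric.mem_ball, dist_zero_right]
          have hle : ‖p‖ ≤ ε/2 := by
            refine (pi_norm_le_iff_of_nonneg (by linarith)).mpr fun i => ?_
            rcases eq_or_ne i 0 with h | h
            · simp only [hp, h, if_pos rfl, Real.norm_eq_abs]
              rw [abs_of_nonneg (by linarith)]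
            · simp only [hp, if_neg h, Real.norm_eq_abs, abs_zero]
              linarith
          linarith
        refine ⟨p, hpK, fun h => ?_⟩
        have h2 := congrFun h 0
        simp only [hp, if_pos rfl, Pi.zero_apply] at h2
        linarith
      · exact ⟨y, hyK, h0⟩
    obtain ⟨x, hxK, hx0⟩ := hex
    obtain ⟨A, hO, hdetA, hAx⟩ := exists_SO_flip hd x hx0
    have hnegx : -x ∈ K := hAx ▸ hinv A hO hdetA x hxK
    exact hx0 (hpt x hxK hnegx)
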